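/- For bases Δ and Δ' of Φ and admissible subsets Y ⊆ Δ and Y' ⊆ Δ', one has F_Y^Δ = F_{Y'}^{Δ'} if and only if ⟨Y⟩ = ⟨Y'⟩ and λ₀(Δ) − λ₀(Δ') ∈ ⟨Y⟩. -/

import Mathlib

/-!
Common setup for Werner, "Compactifications of Bruhat-Tits buildings associated to
linear representations":  a finite-dimensional real vector space `A` (the apartment),
a root system `Φ` in the dual space together with a Weyl-group invariant inner
product, a finite Weyl-invariant set `Λ` of (K-)weights, and for every basis `Δ`
of `Φ` a highest weight `lam0 Δ ∈ Λ`.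
-/

open Pointwise Filter Topology Bornology
open scoped Classical

noncomputable section

/-- A set `M` of linear forms is *connected* if the graph with vertex set `M` and an
edge between `m` and `n` iff `inn m n ≠ 0` is connected. -/
def GraphConnected {D : Type*} (inn : D → D → ℝ) (M : Set D) : Prop :=
  ∀ m ∈ M, ∀ n ∈ M,
    Relation.ReflTransGen (fun x y => x ∈ M ∧ y ∈ M ∧ inn x y ≠ 0) m n

/-- The coefficients of `μ` as a linear combination of the elements of `Δ` (chosen
arbitrarily if one exists; it is unique when `Δ` is linearly independent). -/
noncomputable def coeffs {A : Type*} [AddCommGroup A] [Module ℝ A]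
    (Δ : Finset (Module.Dual ℝ A)) (μ : Module.Dual ℝ A) : Module.Dual ℝ A → ℝ :=
  if h : ∃ n : Module.Dual ℝ A → ℝ, μ = ∑ b ∈ Δ, n b • b then h.choose else fun _ => 0

/-- The support `[μ]` of `μ` with respect to the basis `Δ`: the set of elements of `Δ`
whose coefficient in `μ` is nonzero. -/
noncomputable def supp {A : Type*} [AddCommGroup A] [Module ℝ A]
    (Δ : Finset (Module.Dual ℝ A)) (μ : Module.Dual ℝ A) : Finset (Module.Dual ℝ A) :=
  Δ.filter fun a => coeffs Δ μ a ≠ 0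

/-- Raw data: a finite set `Φ` of roots in the dual of `A`, a product `inn` on the dual,
a finite set `Λ` of weights, and a highest weight `lam0 Δ` for every basis `Δ`. -/
structure RootWeightData (A : Type*) [NormedAddCommGroup A] [NormedSpace ℝ A]
    [FiniteDimensional ℝ A] where
  Φ : Finset (Module.Dual ℝ A)
  inn : Module.Dual ℝ A → Module.Dual ℝ A → ℝ
  Λ : Finset (Module.Dual ℝ A)
  lam0 : Finset (Module.Dual ℝ A) → Module.Dual ℝ A

namespace RootWeightData

variable {A : Type*} [NormedAddCommGroup A] [NormedSpace ℝ A] [FiniteDimensional ℝ A]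
variable (S : RootWeightData A)

/-- The reflection associated to the root `a`. -/
def refl (a : Module.Dual ℝ A) : Function.End (Module.Dual ℝ A) :=
  fun x => x - (2 * S.inn x a / S.inn a a) • a

/-- The Weyl group `W`, generated by the reflections in the roots. -/
def weyl : Submonoid (Function.End (Module.Dual ℝ A)) :=
  Submonoid.closure {f | ∃ a ∈ S.Φ, f = S.refl a}

/-- `Δ` is a basis of the root system `Φ`: a linearly independent subset of `Φ` such
that every root is a nonnegative or nonpositive linear combination of `Δ`. -/
def IsBase (Δ : Finset (Module.Dual ℝ A)) : Prop :=
  (↑Δ : Set (Module.Dual ℝ A)) ⊆ (S.Φ : Set (Module.Dual ℝ A)) ∧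
  LinearIndependent ℝ (fun a : (Δ : Set (Module.Dual ℝ A)) => (a : Module.Dual ℝ A)) ∧
  ∀ a ∈ S.Φ,
    (∃ n : Module.Dual ℝ A → ℝ, (∀ b ∈ Δ, 0 ≤ n b) ∧ a = ∑ b ∈ Δ, n b • b) ∨
    (∃ n : Module.Dual ℝ A → ℝ, (∀ b ∈ Δ, 0 ≤ n b) ∧ a = -∑ b ∈ Δ, n b • b)

/-- `Y` is an admissible subset of the basis `Δ`: `Y ⊆ Δ` and `Y ∪ {λ₀(Δ)}` is
connected. -/
def Admissible (Δ Y : Finset (Module.Dual ℝ A)) : Prop :=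
  Y ⊆ Δ ∧ GraphConnected S.inn ((↑Y : Set (Module.Dual ℝ A)) ∪ {S.lam0 Δ})

end RootWeightData

/-- The whole setting of Werner's paper: the data of `RootWeightData`, where `Φ` is a
(crystallographic, possibly non-reduced) root system spanning the dual of `A`, `inn` is
a Weyl-invariant inner product, `Λ` is a finite Weyl-invariant set of weights, and
`lam0` picks, Weyl-equivariantly, a highest weight for each basis, dominating all of
`Λ`; moreover a subset of a basis is admissible iff it is the support of
`λ₀(Δ) - λ` for some weight `λ`. -/
structure RootWeightSystem (A : Type*) [NormedAddCommGroup A] [NormedSpace ℝ A]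
    [FiniteDimensional ℝ A] extends RootWeightData A where
  inn_symm : ∀ x y, inn x y = inn y x
  inn_add_left : ∀ x y z, inn (x + y) z = inn x z + inn y z
  inn_smul_left : ∀ (c : ℝ) (x y), inn (c • x) y = c * inn x y
  inn_pos : ∀ x, x ≠ 0 → 0 < inn x x
  root_ne_zero : ∀ a ∈ Φ, a ≠ (0 : Module.Dual ℝ A)
  neg_mem : ∀ a ∈ Φ, -a ∈ Φ
  refl_mem : ∀ a ∈ Φ, ∀ b ∈ Φ, toRootWeightData.refl a b ∈ Φ
  inn_weyl_invariant :
    ∀ w ∈ toRootWeightData.weyl, ∀ x y, inn (w x) (w y) = inn x y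
  phi_spans : Submodule.span ℝ (Φ : Set (Module.Dual ℝ A)) = ⊤
  exists_base : ∃ Δ, toRootWeightData.IsBase Δ
  base_cover : ∀ x : A, ∃ Δ, toRootWeightData.IsBase Δ ∧ ∀ a ∈ Δ, 0 ≤ a x
  base_weyl : ∀ w ∈ toRootWeightData.weyl, ∀ Δ, toRootWeightData.IsBase Δ →
    toRootWeightData.IsBase (Δ.image (w : Module.Dual ℝ A → Module.Dual ℝ A))
  lam0_mem : ∀ Δ, toRootWeightData.IsBase Δ → lam0 Δ ∈ Λ
  lam0_dominates : ∀ Δ, toRootWeightData.IsBase Δ → ∀ l ∈ Λ,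
    ∃ n : Module.Dual ℝ A → ℝ, (∀ a ∈ Δ, 0 ≤ n a) ∧ lam0 Δ - l = ∑ a ∈ Δ, n a • a
  weight_weyl_invariant : ∀ w ∈ toRootWeightData.weyl, ∀ l ∈ Λ, w l ∈ Λ
  lam0_equivariant : ∀ w ∈ toRootWeightData.weyl, ∀ Δ, toRootWeightData.IsBase Δ →
    lam0 (Δ.image (w : Module.Dual ℝ A → Module.Dual ℝ A)) = w (lam0 Δ)
  integrality : ∀ l ∈ Λ, ∀ a ∈ Φ, ∃ k : ℤ, 2 * inn l a / inn a a = (k : ℝ)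
  admissible_iff_support : ∀ Δ, toRootWeightData.IsBase Δ → ∀ Y ⊆ Δ,
    (toRootWeightData.Admissible Δ Y ↔ ∃ l ∈ Λ, supp Δ (lam0 Δ - l) = Y)

namespace RootWeightSystem

variable {A : Type*} [NormedAddCommGroup A] [NormedSpace ℝ A] [FiniteDimensional ℝ A]
variable (S : RootWeightSystem A)

/-- The face `F_Y^Δ` of the apartment `A` associated to a basis `Δ` and an admissible
subset `Y ⊆ Δ`. -/
def Face (Δ Y : Finset (Module.Dual ℝ A)) : Set A :=
  {x | (∀ a ∈ Y, a x = 0) ∧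
    ∀ l ∈ S.Λ, ¬ supp Δ (S.lam0 Δ - l) ⊆ Y → 0 < (S.lam0 Δ - l) x}

/-- `F` belongs to the collection `Σ` of faces. -/
def IsFace (F : Set A) : Prop :=
  ∃ Δ Y, S.toRootWeightData.IsBase Δ ∧ S.toRootWeightData.Admissible Δ Y ∧
    F = S.Face Δ Y

/-- The collection `Σ` of all faces. -/
def Faces : Type _ := {F : Set A // S.IsFace F}

/-- The relation identifying `(F, u)` and `(F, v)` when `u - v ∈ ⟨F⟩`; the quotient is
the disjoint union `Ā = ⊔_{F ∈ Σ} A/⟨F⟩`. -/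
def AbarRel (p q : S.Faces × A) : Prop :=
  p.1 = q.1 ∧ p.2 - q.2 ∈ Submodule.span ℝ p.1.val

/-- The compactified apartment `Ā = ⊔_{F ∈ Σ} A_F`, `A_F = A/⟨F⟩`. -/
def Abar : Type _ := Quot S.AbarRel

/-- `r_F(u)`, the image of `u ∈ A` in the stratum `A_F` of `Ā`. -/
def mkAbar (F : S.Faces) (u : A) : S.Abar := Quot.mk _ (F, u)

/-- The basic set `Γ_F(U) = ⋃_{F' ⊆ cl F} r_{F'}(U + F)` of `Ā`. -/
def Gamma (F : S.Faces) (U : Set A) : Set S.Abar :=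
  {p | ∃ F' : S.Faces, F'.val ⊆ closure F.val ∧ ∃ u ∈ U + F.val, p = S.mkAbar F' u}

/-- The topology of `Ā`, generated by the sets `Γ_F(U)` for `F ∈ Σ` and `U ⊆ A`
bounded and open. -/
instance : TopologicalSpace S.Abar :=
  TopologicalSpace.generateFrom
    {V : Set S.Abar | ∃ (F : S.Faces) (U : Set A),
      IsOpen U ∧ IsBounded U ∧ V = S.Gamma F U}

/-- `f_Ω(a) = inf {t : Ω ⊆ cl_Ā {z ∈ A : a(z) ≥ -t}} ∈ ℝ ∪ {±∞}`, where `A` is embedded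
in `Ā` as the stratum of the face `F₀ = {0}`. -/
def fOmega (F₀ : S.Faces) (Ω : Set S.Abar) (a : Module.Dual ℝ A) : EReal :=
  sInf ((fun t : ℝ => (t : EReal)) ''
    {t : ℝ | Ω ⊆ closure (S.mkAbar F₀ '' {z : A | -t ≤ a z})})

end RootWeightSystem


variable {A : Type*} [NormedAddCommGroup A] [NormedSpace ℝ A] [FiniteDimensional ℝ A]

section FaceAux

variable {A : Type*} [NormedAddCommGroup A] [NormedSpace ℝ A] [FiniteDimensional ℝ A]

lemma coeffs_spec' {Δ : Finset (Module.Dual ℝ A)} {μ : Module.Dual ℝ A}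
    (h : ∃ n : Module.Dual ℝ A → ℝ, μ = ∑ b ∈ Δ, n b • b) :
    μ = ∑ b ∈ Δ, coeffs Δ μ b • b := by
  rw [coeffs, dif_pos h]
  exact h.choose_spec

lemma li_sum_eq_zero {Δ : Finset (Module.Dual ℝ A)}
    (hli : LinearIndependent ℝ (fun a : (Δ : Set (Module.Dual ℝ A)) => (a : Module.Dual ℝ A)))
    {g : Module.Dual ℝ A → ℝ} (hg : ∑ b ∈ Δ, g b • b = 0) : ∀ b ∈ Δ, g b = 0 := by
  intro b hb
  have h2 : ∑ i : (Δ : Set (Module.Dual ℝ A)), g (i : Module.Dual ℝ A) • (i : Module.Dual ℝ A) = 0 := by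
    rw [← hg]
    exact Finset.sum_coe_sort Δ (fun b => g b • b)
  have := Fintype.linearIndependent_iff.mp hli (fun i => g (i : Module.Dual ℝ A)) h2
  exact this ⟨b, hb⟩

lemma coeffs_eq {Δ : Finset (Module.Dual ℝ A)}
    (hli : LinearIndependent ℝ (fun a : (Δ : Set (Module.Dual ℝ A)) => (a : Module.Dual ℝ A)))
    {μ : Module.Dual ℝ A} {n : Module.Dual ℝ A → ℝ}
    (h : μ = ∑ b ∈ Δ, n b • b) : ∀ b ∈ Δ, coeffs Δ μ b = n b := by
  have hs := coeffs_spec' ⟨n, h⟩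
  have hz : ∑ b ∈ Δ, (coeffs Δ μ b - n b) • b = 0 := by
    have h0 : ∑ b ∈ Δ, (coeffs Δ μ b - n b) • b
        = (∑ b ∈ Δ, coeffs Δ μ b • b) - ∑ b ∈ Δ, n b • b := by
      rw [← Finset.sum_sub_distrib]
      exact Finset.sum_congr rfl fun b _ => by module
    rw [h0, ← hs, ← h, sub_self]
  intro b hb
  have := li_sum_eq_zero hli hz b hb
  linarith

lemma supp_subset_iff {Δ Y : Finset (Module.Dual ℝ A)}
    (hli : LinearIndependent ℝ (fun a : (Δ : Set (Module.Dual ℝ A)) => (a : Module.Dual ℝ A)))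
    (hYΔ : Y ⊆ Δ) {μ : Module.Dual ℝ A}
    (h : ∃ n : Module.Dual ℝ A → ℝ, μ = ∑ b ∈ Δ, n b • b) :
    supp Δ μ ⊆ Y ↔ μ ∈ Submodule.span ℝ (Y : Set (Module.Dual ℝ A)) := by
  constructor
  · intro hs
    rw [coeffs_spec' h]
    refine Submodule.sum_mem _ fun b hb => ?_
    by_cases hc : coeffs Δ μ b = 0
    · simp [hc]
    · exact Submodule.smul_mem _ _ (Submodule.subset_span
        (by exact_mod_cast hs (Finset.mem_filter.mpr ⟨hb, hc⟩)))
  · intro hμ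
    obtain ⟨m, -, hm⟩ := Submodule.mem_span_finset.mp hμ
    set n : Module.Dual ℝ A → ℝ := fun b => if b ∈ Y then m b else 0 with hn
    have hrep : μ = ∑ b ∈ Δ, n b • b := by
      rw [hn]
      simp only [ite_smul, zero_smul]
      rw [Finset.sum_ite_mem, Finset.inter_eq_right.mpr hYΔ, hm]
    intro b hb
    obtain ⟨hbΔ, hbc⟩ := Finset.mem_filter.mp hb
    have := coeffs_eq hli hrep b hbΔ
    by_contra hbY
    rw [this, hn] at hbc
    simp [hbY] at hbc

lemma exists_point {Δ : Finset (Module.Dual ℝ A)}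
    (hli : LinearIndependent ℝ (fun a : (Δ : Set (Module.Dual ℝ A)) => (a : Module.Dual ℝ A)))
    (c : Module.Dual ℝ A → ℝ) : ∃ x : A, ∀ a ∈ Δ, a x = c a := by
  have hli' : LinearIndepOn ℝ id (Δ : Set (Module.Dual ℝ A)) := hli
  let b := Module.Basis.extend hli'
  let ξ : Module.Dual ℝ (Module.Dual ℝ A) :=
    b.constr ℝ (fun i => c (i : Module.Dual ℝ A))
  refine ⟨(Module.evalEquiv ℝ A).symm ξ, fun a ha => ?_⟩
  have hmem : a ∈ hli'.extend (Set.subset_univ _) :=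
    hli'.subset_extend _ (by exact_mod_cast ha)
  rw [Module.apply_evalEquiv_symm_apply]
  have h1 : b ⟨a, hmem⟩ = a := Module.Basis.extend_apply_self hli' ⟨a, hmem⟩
  have h2 : ξ (b ⟨a, hmem⟩) = c a := Module.Basis.constr_basis b ℝ _ ⟨a, hmem⟩
  rwa [h1] at h2

end FaceAux

namespace RootWeightSystem

variable {A : Type*} [NormedAddCommGroup A] [NormedSpace ℝ A] [FiniteDimensional ℝ A]
variable (S : RootWeightSystem A)

lemma face_mem_special {Δ Y : Finset (Module.Dual ℝ A)} (hΔ : S.toRootWeightData.IsBase Δ)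
    (hYΔ : Y ⊆ Δ) {x : A}
    (hx : ∀ a ∈ Δ, a x = (if a ∈ Y then (0 : ℝ) else 1)) :
    x ∈ S.Face Δ Y := by
  constructor
  · intro a ha
    simpa [ha] using hx a (hYΔ ha)
  · intro l hl hns
    obtain ⟨n, hn0, hnrep⟩ := S.lam0_dominates Δ hΔ l hl
    have hval : (S.lam0 Δ - l) x = ∑ b ∈ Δ, n b * (b x) := by
      rw [hnrep]
      simp [LinearMap.sum_apply, LinearMap.smul_apply, smul_eq_mul]
    rw [hval]
    obtain ⟨b₀, hb₀s, hb₀Y⟩ := Finset.not_subset.mp hns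
    obtain ⟨hb₀Δ, hb₀c⟩ := Finset.mem_filter.mp hb₀s
    have hco := coeffs_eq hΔ.2.1 hnrep b₀ hb₀Δ
    refine Finset.sum_pos' (fun b hb => ?_) ⟨b₀, hb₀Δ, ?_⟩
    · rw [hx b hb]
      by_cases hbY : b ∈ Y <;> simp [hbY, hn0 b hb]
    · rw [hx b₀ hb₀Δ]
      simp only [hb₀Y, if_false, mul_one]
      rcases lt_or_eq_of_le (hn0 b₀ hb₀Δ) with h | h
      · exact h
      · exact absurd (hco.trans h.symm) hb₀c

lemma face_nonempty {Δ Y : Finset (Module.Dual ℝ A)} (hΔ : S.toRootWeightData.IsBase Δ)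
    (hYΔ : Y ⊆ Δ) : ∃ x, x ∈ S.Face Δ Y := by
  obtain ⟨x, hx⟩ := exists_point hΔ.2.1 (fun a => if a ∈ Y then (0 : ℝ) else 1)
  exact ⟨x, S.face_mem_special hΔ hYΔ hx⟩

lemma mem_span_iff_face {Δ Y : Finset (Module.Dual ℝ A)} (hΔ : S.toRootWeightData.IsBase Δ)
    (hYΔ : Y ⊆ Δ) (μ : Module.Dual ℝ A) :
    μ ∈ Submodule.span ℝ (Y : Set (Module.Dual ℝ A)) ↔
      ∀ x ∈ S.Face Δ Y, ∀ y ∈ S.Face Δ Y, μ x = μ y := by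
  constructor
  · intro hμ x hx y hy
    have hker : (Y : Set (Module.Dual ℝ A)) ⊆
        (LinearMap.ker (Module.Dual.eval ℝ A (x - y)) : Set (Module.Dual ℝ A)) := by
      intro a ha
      have ha' : a ∈ Y := ha
      simp only [SetLike.mem_coe, LinearMap.mem_ker]
      show a (x - y) = 0
      rw [map_sub, hx.1 a ha', hy.1 a ha', sub_self]
    have h := Submodule.span_le.mpr hker hμ
    rw [LinearMap.mem_ker] at h
    have h2 : μ (x - y) = 0 := h
    rw [map_sub, sub_eq_zero] at h2
    exact h2
  · intro hc
    obtain ⟨x₀, hx₀⟩ := S.face_nonempty hΔ hYΔ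
    have key : ∀ v : A, (∀ a ∈ Y, a v = 0) → μ v = 0 := by
      intro v hv
      have h1 : ∀ l ∈ (S.Λ : Set (Module.Dual ℝ A)), ∀ᶠ t : ℝ in 𝓝[>] 0,
          ¬ supp Δ (S.lam0 Δ - l) ⊆ Y → 0 < (S.lam0 Δ - l) (x₀ + t • v) := by
        intro l hl
        by_cases hns : supp Δ (S.lam0 Δ - l) ⊆ Y
        · filter_upwards with t h
          exact absurd hns h
        · have hpos : 0 < (S.lam0 Δ - l) x₀ := hx₀.2 l hl hns
          have hcont : Filter.Tendsto
              (fun t : ℝ => (S.lam0 Δ - l) x₀ + t * (S.lam0 Δ - l) v)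
              (𝓝 0) (𝓝 ((S.lam0 Δ - l) x₀)) := by
            have h0 : Filter.Tendsto
                (fun t : ℝ => (S.lam0 Δ - l) x₀ + t * (S.lam0 Δ - l) v) (𝓝 0)
                (𝓝 ((S.lam0 Δ - l) x₀ + 0 * (S.lam0 Δ - l) v)) :=
              Filter.Tendsto.add tendsto_const_nhds
                (Filter.Tendsto.mul tendsto_id tendsto_const_nhds)
            simpa using h0
          have hev := hcont.eventually (eventually_gt_nhds hpos)
          filter_upwards [hev.filter_mono nhdsWithin_le_nhds] with t ht _
          simpa [map_add, map_smul, smul_eq_mul] using ht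
      have h2 := (Filter.eventually_all_finite S.Λ.finite_toSet).mpr h1
      have hev : ∀ᶠ t : ℝ in 𝓝[>] 0, (x₀ + t • v) ∈ S.Face Δ Y := by
        filter_upwards [h2] with t ht
        refine ⟨fun a ha => ?_, fun l hl => ht l (by exact_mod_cast hl)⟩
        simp [map_add, map_smul, hx₀.1 a ha, hv a ha, smul_eq_mul]
      obtain ⟨t, hmem, htpos⟩ := (hev.and self_mem_nhdsWithin).exists
      have h3 : μ (x₀ + t • v) = μ x₀ := hc _ hmem _ hx₀
      have h4 : μ x₀ + t * μ v = μ x₀ := by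
        simpa [map_add, map_smul, smul_eq_mul] using h3
      have h5 : t * μ v = 0 := by linarith
      rcases mul_eq_zero.mp h5 with h | h
      · exact absurd h (ne_of_gt htpos)
      · exact h
    have hfin : μ ∈ (Submodule.span ℝ
        (Y : Set (Module.Dual ℝ A))).dualCoannihilator.dualAnnihilator := by
      rw [Submodule.mem_dualAnnihilator]
      intro w hw
      rw [Submodule.mem_dualCoannihilator] at hw
      exact key w fun a ha => hw a (Submodule.subset_span ha)
    rwa [Subspace.dualCoannihilator_dualAnnihilator_eq] at hfin

lemma face_subset_aux {Δ Δ' Y Y' : Finset (Module.Dual ℝ A)}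
    (hΔ : S.toRootWeightData.IsBase Δ) (hΔ' : S.toRootWeightData.IsBase Δ')
    (hYΔ : Y ⊆ Δ) (hYΔ' : Y' ⊆ Δ')
    (hspan : Submodule.span ℝ ((Y : Set (Module.Dual ℝ A))) =
      Submodule.span ℝ ((Y' : Set (Module.Dual ℝ A))))
    (hmem : S.lam0 Δ - S.lam0 Δ' ∈ Submodule.span ℝ ((Y : Set (Module.Dual ℝ A)))) :
    S.Face Δ' Y' ⊆ S.Face Δ Y := by
  intro x hx
  have hx0 : ∀ μ ∈ Submodule.span ℝ ((Y' : Set (Module.Dual ℝ A))), μ x = 0 := by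
    intro μ hμ
    have hker : (Y' : Set (Module.Dual ℝ A)) ⊆
        (LinearMap.ker (Module.Dual.eval ℝ A x) : Set (Module.Dual ℝ A)) := by
      intro a ha
      have ha' : a ∈ Y' := ha
      simp only [SetLike.mem_coe, LinearMap.mem_ker]
      show a x = 0
      exact hx.1 a ha'
    have h := Submodule.span_le.mpr hker hμ
    rw [LinearMap.mem_ker] at h
    exact h
  constructor
  · intro a ha
    exact hx0 a (hspan ▸ Submodule.subset_span (Finset.mem_coe.mpr ha))
  · intro l hl hns
    obtain ⟨n', _, hrep'⟩ := S.lam0_dominates Δ' hΔ' l hl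
    have hns' : ¬ supp Δ' (S.lam0 Δ' - l) ⊆ Y' := by
      intro hsub
      have h1 : S.lam0 Δ' - l ∈ Submodule.span ℝ ((Y' : Set (Module.Dual ℝ A))) :=
        (supp_subset_iff hΔ'.2.1 hYΔ' ⟨n', hrep'⟩).mp hsub
      have h2 : S.lam0 Δ - l ∈ Submodule.span ℝ ((Y : Set (Module.Dual ℝ A))) := by
        have heq : S.lam0 Δ - l = (S.lam0 Δ - S.lam0 Δ') + (S.lam0 Δ' - l) := by abel
        rw [heq]
        exact Submodule.add_mem _ hmem (hspan ▸ h1)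
      obtain ⟨n, _, hrep⟩ := S.lam0_dominates Δ hΔ l hl
      exact hns ((supp_subset_iff hΔ.2.1 hYΔ ⟨n, hrep⟩).mpr h2)
    have hpos := hx.2 l hl hns'
    have hz : (S.lam0 Δ - S.lam0 Δ') x = 0 := hx0 _ (hspan ▸ hmem)
    have heq : (S.lam0 Δ - l) x = (S.lam0 Δ' - l) x + (S.lam0 Δ - S.lam0 Δ') x := by
      simp only [LinearMap.sub_apply]
      ring
    rw [heq, hz, add_zero]
    exact hpos

end RootWeightSystem

/-- For bases `Δ`, `Δ'` of `Φ` and admissible subsets `Y ⊆ Δ`,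
`Y' ⊆ Δ'`, one has `F_Y^Δ = F_{Y'}^{Δ'}` iff `⟨Y⟩ = ⟨Y'⟩` and
`λ₀(Δ) - λ₀(Δ') ∈ ⟨Y⟩`. -/
theorem face_eq_iff (S : RootWeightSystem A)
    (Δ Δ' Y Y' : Finset (Module.Dual ℝ A))
    (hΔ : S.toRootWeightData.IsBase Δ) (hΔ' : S.toRootWeightData.IsBase Δ')
    (hY : S.toRootWeightData.Admissible Δ Y)
    (hY' : S.toRootWeightData.Admissible Δ' Y') :
    S.Face Δ Y = S.Face Δ' Y' ↔
      (Submodule.span ℝ ((Y : Set (Module.Dual ℝ A))) =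
          Submodule.span ℝ ((Y' : Set (Module.Dual ℝ A))) ∧
        S.lam0 Δ - S.lam0 Δ' ∈ Submodule.span ℝ ((Y : Set (Module.Dual ℝ A)))) := by
  have hYΔ := hY.1
  have hYΔ' := hY'.1
  constructor
  · intro hF
    have hspan : Submodule.span ℝ ((Y : Set (Module.Dual ℝ A))) =
        Submodule.span ℝ ((Y' : Set (Module.Dual ℝ A))) := by
      ext μ
      rw [S.mem_span_iff_face hΔ hYΔ μ, hF, ← S.mem_span_iff_face hΔ' hYΔ' μ]
    refine ⟨hspan, ?_⟩
    by_contra hmem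
    obtain ⟨x₀, hx₀⟩ := S.face_nonempty hΔ hYΔ
    have hx₀' : x₀ ∈ S.Face Δ' Y' := hF ▸ hx₀
    have h1 : ¬ supp Δ (S.lam0 Δ - S.lam0 Δ') ⊆ Y := by
      intro hsub
      obtain ⟨n, _, hrep⟩ := S.lam0_dominates Δ hΔ (S.lam0 Δ') (S.lam0_mem Δ' hΔ')
      exact hmem ((supp_subset_iff hΔ.2.1 hYΔ ⟨n, hrep⟩).mp hsub)
    have h2 : ¬ supp Δ' (S.lam0 Δ' - S.lam0 Δ) ⊆ Y' := by
      intro hsub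
      obtain ⟨n, _, hrep⟩ := S.lam0_dominates Δ' hΔ' (S.lam0 Δ) (S.lam0_mem Δ hΔ)
      have := (supp_subset_iff hΔ'.2.1 hYΔ' ⟨n, hrep⟩).mp hsub
      rw [← hspan] at this
      have h3 : S.lam0 Δ - S.lam0 Δ' = -(S.lam0 Δ' - S.lam0 Δ) := by abel
      exact hmem (h3 ▸ Submodule.neg_mem _ this)
    have hp1 : 0 < (S.lam0 Δ - S.lam0 Δ') x₀ := hx₀.2 _ (S.lam0_mem Δ' hΔ') h1
    have hp2 : 0 < (S.lam0 Δ' - S.lam0 Δ) x₀ := hx₀'.2 _ (S.lam0_mem Δ hΔ) h2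
    simp only [LinearMap.sub_apply] at hp1 hp2
    linarith
  · rintro ⟨hspan, hmem⟩
    have hmem' : S.lam0 Δ' - S.lam0 Δ ∈ Submodule.span ℝ ((Y' : Set (Module.Dual ℝ A))) := by
      have h3 : S.lam0 Δ' - S.lam0 Δ = -(S.lam0 Δ - S.lam0 Δ') := by abel
      rw [h3, ← hspan]
      exact Submodule.neg_mem _ hmem
    exact le_antisymm (S.face_subset_aux hΔ' hΔ hYΔ' hYΔ hspan.symm hmem')
      (S.face_subset_aux hΔ hΔ' hYΔ hYΔ' hspan hmem)
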